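/- For r dividing n, the r-regular Ulam sphere of radius 1 centered at the identity multipermutation has size |S(m_e^r, 1)| = 1 + (n−1)(n/r − 1). -/

import Mathlib

namespace UlamPaper

/-- Underlying function of the translocation `φ(i,j)` (0-indexed). -/
def tf (i j k : ℕ) : ℕ :=
  if i ≤ j then (if k < i ∨ j < k then k else if k = j then i else k + 1)
  else (if k < j ∨ i < k then k else if k = j then i else k - 1)

theorem tf_lt {n i j k : ℕ} (hi : i < n) (hj : j < n) (hk : k < n) : tf i j k < n := by
  unfold tf; split_ifs <;> omega

theorem tf_tf (i j k : ℕ) : tf j i (tf i j k) = k := by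
  unfold tf; split_ifs <;> omega

/-- The translocation `φ(i,j)` as a permutation of `Fin n`: it deletes the entry in
position `i` and reinserts it at position `j`, shifting intermediate entries. -/
def transloc {n : ℕ} (i j : Fin n) : Equiv.Perm (Fin n) where
  toFun k := ⟨tf i.val j.val k.val, tf_lt i.isLt j.isLt k.isLt⟩
  invFun k := ⟨tf j.val i.val k.val, tf_lt j.isLt i.isLt k.isLt⟩
  left_inv k := Fin.ext (tf_tf i.val j.val k.val)
  right_inv k := Fin.ext (tf_tf j.val i.val k.val)

/-- `IsTransloc φ` : `φ` is a translocation. -/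
def IsTransloc {n : ℕ} (φ : Equiv.Perm (Fin n)) : Prop := ∃ i j : Fin n, φ = transloc i j

/-- Length of the longest common subsequence of two `n`-length sequences. -/
noncomputable def lcsLen {n : ℕ} {α : Type*} (u v : Fin n → α) : ℕ :=
  sSup {k | ∃ f g : Fin k → Fin n, StrictMono f ∧ StrictMono g ∧ ∀ p, u (f p) = v (g p)}

/-- The Ulam distance `d(σ,π) = n - ℓ(σ,π)`. -/
noncomputable def ulamDist {n : ℕ} (σ π : Equiv.Perm (Fin n)) : ℕ :=
  n - lcsLen (⇑σ) (⇑π)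

/-- The `r`-regular multipermutation `m_σ^r` (with values in `[1, n/r]`). -/
def mult {n : ℕ} (r : ℕ) (σ : Equiv.Perm (Fin n)) : Fin n → ℕ :=
  fun i => (σ i).val / r + 1

/-- The `r`-regular Ulam distance, expressed as `n - ℓ(m_σ^r, m_π^r)`. -/
noncomputable def multDist {n : ℕ} (r : ℕ) (σ π : Equiv.Perm (Fin n)) : ℕ :=
  n - lcsLen (mult r σ) (mult r π)
/-- The `r`-regular Ulam sphere of radius `t` centered at `m_σ^r`. -/
def multSphere {n : ℕ} (r : ℕ) (σ : Equiv.Perm (Fin n)) (t : ℕ) : Set (Fin n → ℕ) :=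
  {x | ∃ π : Equiv.Perm (Fin n), x = mult r π ∧ multDist r σ π ≤ t}

/-! ### Auxiliary lemmas on `lcsLen` -/

theorem lcs_set_bdd {n : ℕ} {α : Type*} (u v : Fin n → α) :
    BddAbove {k | ∃ f g : Fin k → Fin n, StrictMono f ∧ StrictMono g ∧ ∀ p, u (f p) = v (g p)} := by
  refine ⟨n, fun k hk => ?_⟩
  obtain ⟨f, g, hf, hg, -⟩ := hk
  simpa using Fintype.card_le_of_injective f hf.injective

theorem lcs_set_nonempty {n : ℕ} {α : Type*} (u v : Fin n → α) :
    ({k | ∃ f g : Fin k → Fin n, StrictMono f ∧ StrictMono g ∧ ∀ p, u (f p) = v (g p)}).Nonempty :=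
  ⟨0, (fun p => p.elim0), (fun p => p.elim0), fun p => p.elim0, fun p => p.elim0, fun p => p.elim0⟩

theorem le_lcsLen {n : ℕ} {α : Type*} {u v : Fin n → α} {k : ℕ} (f g : Fin k → Fin n)
    (hf : StrictMono f) (hg : StrictMono g) (h : ∀ p, u (f p) = v (g p)) : k ≤ lcsLen u v :=
  le_csSup (lcs_set_bdd u v) ⟨f, g, hf, hg, h⟩

theorem exists_of_le_lcsLen {n : ℕ} {α : Type*} {u v : Fin n → α} {k : ℕ}
    (hk : k ≤ lcsLen u v) :
    ∃ f g : Fin k → Fin n, StrictMono f ∧ StrictMono g ∧ ∀ p, u (f p) = v (g p) := by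
  have hmem := Nat.sSup_mem (lcs_set_nonempty u v) (lcs_set_bdd u v)
  obtain ⟨f, g, hf, hg, h⟩ := hmem
  exact ⟨f ∘ Fin.castLE hk, g ∘ Fin.castLE hk, hf.comp (Fin.strictMono_castLE hk),
    hg.comp (Fin.strictMono_castLE hk), fun p => h _⟩

/-- Classification of strictly monotone maps `Fin m → Fin (m+1)`. -/
theorem strictMono_eq_succAbove {m : ℕ} {f : Fin m → Fin (m + 1)} (hf : StrictMono f) :
    ∃ p : Fin (m + 1), f = p.succAbove := by
  have hcard : (Finset.univ.image f)ᶜ.card = 1 := by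
    rw [Finset.card_compl, Finset.card_image_of_injective _ hf.injective]
    simp
  obtain ⟨p, hp⟩ := Finset.card_eq_one.1 hcard
  refine ⟨p, (StrictMono.range_inj hf (Fin.strictMono_succAbove p)).1 ?_⟩
  rw [Fin.range_succAbove]
  ext x
  have hx : x ∈ Set.range f ↔ x ∈ Finset.univ.image f := by simp
  rw [hx]
  constructor
  · intro hx1 hxp
    have : x ∈ (Finset.univ.image f)ᶜ := by rw [hp]; simpa using hxp
    exact (Finset.mem_compl.1 this) hx1
  · intro hx1
    by_contra hxf
    have : x ∈ (Finset.univ.image f)ᶜ := Finset.mem_compl.2 hxf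
    rw [hp] at this
    simp only [Finset.mem_singleton] at this
    exact hx1 this

/-! ### Multiset lemmas -/

theorem univ_val_eq {m : ℕ} (j : Fin (m + 1)) :
    (Finset.univ : Finset (Fin (m + 1))).val
      = j ::ₘ Multiset.map j.succAbove (Finset.univ : Finset (Fin m)).val := by
  have hnodup : (j ::ₘ Multiset.map j.succAbove (Finset.univ : Finset (Fin m)).val).Nodup := by
    refine Multiset.nodup_cons.2
      ⟨?_, Multiset.Nodup.map (Fin.succAbove_right_injective) Finset.univ.nodup⟩
    intro hj
    obtain ⟨p, -, hp⟩ := Multiset.mem_map.1 hj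
    exact Fin.succAbove_ne j p hp
  rw [Multiset.Nodup.ext Finset.univ.nodup hnodup]
  intro a
  simp only [Multiset.mem_cons, Multiset.mem_map, Finset.mem_val, Finset.mem_univ, true_and,
    iff_true]
  constructor
  · intro _
    rcases eq_or_ne a j with h | h
    · exact Or.inl h
    · refine Or.inr ?_
      have : a ∈ Set.range j.succAbove := by rw [Fin.range_succAbove]; exact h
      obtain ⟨p, hp⟩ := this
      exact ⟨p, hp⟩
  · exact fun _ => trivial

theorem apply_eq_of_delete_eq {m : ℕ} (x y : Fin (m + 1) → ℕ) (j i : Fin (m + 1))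
    (hmult : Multiset.map x (Finset.univ : Finset (Fin (m+1))).val
      = Multiset.map y (Finset.univ : Finset (Fin (m+1))).val)
    (h : x ∘ j.succAbove = y ∘ i.succAbove) : x j = y i := by
  have hx : Multiset.map x (Finset.univ : Finset (Fin (m+1))).val
      = x j ::ₘ Multiset.map (x ∘ j.succAbove) (Finset.univ : Finset (Fin m)).val := by
    rw [univ_val_eq j, Multiset.map_cons, Multiset.map_map]
  have hy : Multiset.map y (Finset.univ : Finset (Fin (m+1))).val
      = y i ::ₘ Multiset.map (y ∘ i.succAbove) (Finset.univ : Finset (Fin m)).val := by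
    rw [univ_val_eq i, Multiset.map_cons, Multiset.map_map]
  rw [hx, hy, ← h] at hmult
  exact (Multiset.cons_inj_left _).1 hmult

theorem map_perm_univ {m : ℕ} (x : Fin m → ℕ) (π : Equiv.Perm (Fin m)) :
    Multiset.map (x ∘ π) (Finset.univ : Finset (Fin m)).val
      = Multiset.map x (Finset.univ : Finset (Fin m)).val := by
  have h : Multiset.map (⇑π) (Finset.univ : Finset (Fin m)).val
      = (Finset.univ : Finset (Fin m)).val := by
    have h2 := Finset.map_univ_equiv π
    calc Multiset.map (⇑π) Finset.univ.val
        = (Finset.univ.map π.toEmbedding).val := by rw [Finset.map_val]; rfl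
      _ = Finset.univ.val := by rw [h2]
  calc Multiset.map (x ∘ ⇑π) Finset.univ.val
      = Multiset.map x (Multiset.map (⇑π) Finset.univ.val) := by rw [Multiset.map_map]
    _ = Multiset.map x Finset.univ.val := by rw [h]

/-! ### Division toolkit -/

theorem dspec {r : ℕ} (hr : 0 < r) (k : ℕ) : r * (k / r) ≤ k ∧ k < r * (k / r) + r := by
  have h1 := Nat.div_add_mod k r
  have h2 := Nat.mod_lt k hr
  omega

theorem deq {r : ℕ} (hr : 0 < r) {c k : ℕ} (h1 : r * c ≤ k) (h2 : k < r * c + r) :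
    k / r = c := by
  have e1 : c * r = r * c := Nat.mul_comm c r
  have e2 : (c + 1) * r = r * c + r := by ring
  have hle : c ≤ k / r := (Nat.le_div_iff_mul_le hr).2 (by omega)
  have hlt : k / r < c + 1 := (Nat.div_lt_iff_lt_mul hr).2 (by omega)
  omega

theorem dsucc {r : ℕ} (hr : 0 < r) (x : ℕ) : (x + 1) / r ≤ x / r + 1 ∧ x / r ≤ (x + 1) / r := by
  constructor
  · calc (x + 1) / r ≤ (x + r) / r := Nat.div_le_div_right (by omega)
      _ = x / r + 1 := Nat.add_div_right x hr
  · exact Nat.div_le_div_right (by omega)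

theorem rmul_sub_one {r a : ℕ} (ha : 1 ≤ a) : r * a = r * (a - 1) + r := by
  have h : a - 1 + 1 = a := by omega
  calc r * a = r * (a - 1 + 1) := by rw [h]
    _ = r * (a - 1) + r := by ring

/-! ### The candidate sphere elements -/

/-- Value at position `k` of the multipermutation obtained from the identity by
moving one symbol `a` to position `j`. -/
def xa (r a j k : ℕ) : ℕ :=
  if k = j then a
  else if a < j / r + 1 then (if k < j ∧ r * (a - 1) ≤ k then (k + 1) / r + 1 else k / r + 1)
  else (if j < k ∧ k < r * a then (k - 1) / r + 1 else k / r + 1)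

theorem xa_self (r a j : ℕ) : xa r a j j = a := by unfold xa; simp

theorem tf_div_left {r : ℕ} (hr : 0 < r) {i j a : ℕ} (ha : i / r + 1 = a)
    (hc : a < j / r + 1) (k : ℕ) : tf i j k / r + 1 = xa r a j k := by
  have hi := dspec hr i
  have hj := dspec hr j
  obtain ⟨di, hdi⟩ : ∃ t, i / r = t := ⟨_, rfl⟩
  obtain ⟨dj, hdj⟩ : ∃ t, j / r = t := ⟨_, rfl⟩
  rw [hdi] at hi ha
  rw [hdj] at hj hc
  have hd : di = a - 1 := by omega
  subst hd
  have ha1 : 1 ≤ a := by omega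
  have hbr : r * a = r * (a - 1) + r := rmul_sub_one ha1
  have hraj : r * a ≤ j := by
    have h1 : a ≤ dj := by omega
    calc r * a ≤ r * dj := Nat.mul_le_mul_left r h1
      _ ≤ j := hj.1
  have hij : i < j := by omega
  unfold tf xa
  rw [hdj]
  split_ifs <;>
    first
      | rfl
      | omega
      | (rw [hdi]; omega)
      | (have d0 : k / r = a - 1 := deq hr (by omega) (by omega)
         have d1 : (k + 1) / r = a - 1 := deq hr (by omega) (by omega)
         rw [d0, d1])
      | (have d0 : k / r = a - 1 := deq hr (by omega) (by omega)
         have d1 : (k - 1) / r = a - 1 := deq hr (by omega) (by omega)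
         rw [d0, d1])

theorem tf_div_right {r : ℕ} (hr : 0 < r) {i j a : ℕ} (ha : i / r + 1 = a)
    (hc : j / r + 1 < a) (k : ℕ) : tf i j k / r + 1 = xa r a j k := by
  have hi := dspec hr i
  have hj := dspec hr j
  obtain ⟨di, hdi⟩ : ∃ t, i / r = t := ⟨_, rfl⟩
  obtain ⟨dj, hdj⟩ : ∃ t, j / r = t := ⟨_, rfl⟩
  rw [hdi] at hi ha
  rw [hdj] at hj hc
  have hd : di = a - 1 := by omega
  subst hd
  have ha1 : 2 ≤ a := by omega
  have hbr : r * a = r * (a - 1) + r := rmul_sub_one (by omega)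
  have hbr2 : r * (a - 1) = r * (a - 1 - 1) + r := rmul_sub_one (by omega)
  have hbr3 : a - 1 - 1 = a - 2 := by omega
  have hja : j < r * (a - 1) := by
    have h1 : dj ≤ a - 2 := by omega
    have h2 : r * dj ≤ r * (a - 2) := Nat.mul_le_mul_left r h1
    rw [hbr3] at hbr2
    omega
  have hji : j < i := by omega
  unfold tf xa
  rw [hdj]
  split_ifs <;>
    first
      | rfl
      | omega
      | (rw [hdi]; omega)
      | (have d0 : k / r = a - 1 := deq hr (by omega) (by omega)
         have d1 : (k - 1) / r = a - 1 := deq hr (by omega) (by omega)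
         rw [d0, d1])

theorem tf_div_swap {r : ℕ} (hr : 0 < r) {i j a : ℕ} (ha : i / r + 1 = a)
    (hc : j / r + 1 < a) (hs : j + 1 = r * (a - 1)) (k : ℕ) :
    tf i j k / r + 1 = xa r (a - 1) (r * (a - 1)) k := by
  have hi := dspec hr i
  have hj := dspec hr j
  obtain ⟨di, hdi⟩ : ∃ t, i / r = t := ⟨_, rfl⟩
  obtain ⟨dj, hdj⟩ : ∃ t, j / r = t := ⟨_, rfl⟩
  rw [hdi] at hi ha
  rw [hdj] at hj hc
  have hd : di = a - 1 := by omega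
  subst hd
  have ha1 : 2 ≤ a := by omega
  have hbr : r * a = r * (a - 1) + r := rmul_sub_one (by omega)
  have hbr2 : r * (a - 1) = r * (a - 1 - 1) + r := rmul_sub_one (by omega)
  have hji : j < i := by omega
  have hj' : r * (a - 1) / r = a - 1 := deq hr le_rfl (by omega)
  unfold tf xa
  rw [hj']
  split_ifs <;>
    first
      | rfl
      | omega
      | (rw [hdi]; omega)
      | (have d1 : (k + 1) / r = a - 1 := deq hr (by omega) (by omega)
         rw [hdi, d1])
      | (have d1 : (k - 1) / r = a - 1 - 1 := deq hr (by omega) (by omega)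
         rw [d1]; omega)
      | (have d0 : k / r = a - 1 - 1 := deq hr (by omega) (by omega)
         have d1 : (k + 1) / r = a - 1 - 1 := deq hr (by omega) (by omega)
         rw [d0, d1])
      | (have d0 : k / r = a - 1 := deq hr (by omega) (by omega)
         have d1 : (k - 1) / r = a - 1 := deq hr (by omega) (by omega)
         rw [d0, d1])

theorem tf_div_same {r : ℕ} (hr : 0 < r) {i j : ℕ} (h : i / r = j / r) (k : ℕ) :
    (tf i j k) / r = k / r := by
  have hi := dspec hr i
  have hj := dspec hr j
  have hk := dspec hr k
  rw [h] at hi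
  obtain ⟨dj, hdj⟩ : ∃ t, j / r = t := ⟨_, rfl⟩
  rw [hdj] at hi hj h
  unfold tf
  split_ifs with h1 h2 h3 h4 h5 h6 <;> try rfl
  · subst h3; omega
  · have hk1 : (k + 1) / r = dj := deq hr (by omega) (by omega)
    have hk0 : k / r = dj := deq hr (by omega) (by omega)
    omega
  · subst h5; omega
  · have hk1 : (k - 1) / r = dj := deq hr (by omega) (by omega)
    have hk0 : k / r = dj := deq hr (by omega) (by omega)
    omega

/-! ### Injectivity -/

theorem xa_inj_core {n r : ℕ} (hr : 0 < r) {j a j' a' : ℕ}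
    (hjn : j < n) (hane : a ≠ j / r + 1) (hane' : a' ≠ j' / r + 1)
    (hexc' : ¬(2 ≤ a' ∧ j' + 1 = r * (a' - 1)))
    (hlt : j' < j)
    (heq : ∀ k, k < n → xa r a j k = xa r a' j' k) : False := by
  have hj1 : 1 ≤ j := by omega
  have e1 := heq j hjn
  have e2 := heq j' (by omega)
  have e3 := heq (j' + 1) (by omega)
  rw [xa_self] at e1
  rw [xa_self] at e2
  unfold xa at e1 e2 e3
  rw [if_neg (show ¬ j = j' by omega)] at e1
  rw [if_neg (show ¬ j' = j by omega)] at e2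
  simp only [show j' + 1 + 1 = j' + 2 from rfl, Nat.add_sub_cancel] at e3
  have hsj := dsucc hr (j - 1)
  rw [show j - 1 + 1 = j from by omega] at hsj
  have hs0 := dsucc hr j'
  have hs1 := dsucc hr (j' + 1)
  simp only [show j' + 1 + 1 = j' + 2 from rfl] at hs1
  have hdj := dspec hr j
  have hdjm := dspec hr (j - 1)
  have hd0 := dspec hr j'
  have hd1 := dspec hr (j' + 1)
  obtain ⟨Dj, hDj⟩ : ∃ t, j / r = t := ⟨_, rfl⟩
  obtain ⟨Djm, hDjm⟩ : ∃ t, (j - 1) / r = t := ⟨_, rfl⟩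
  obtain ⟨D0, hD0⟩ : ∃ t, j' / r = t := ⟨_, rfl⟩
  obtain ⟨D1, hD1⟩ : ∃ t, (j' + 1) / r = t := ⟨_, rfl⟩
  obtain ⟨D2, hD2⟩ : ∃ t, (j' + 2) / r = t := ⟨_, rfl⟩
  simp only [hDj, hDjm, hD0, hD1, hD2] at e1 e2 e3 hane hane' hsj hs0 hs1 hdj hdjm hd0 hd1
  have hA : ¬ a' < D0 + 1 ∧ j < r * a' ∧ a = Djm + 1 := by
    split_ifs at e1 <;> omega
  have hB : a < Dj + 1 ∧ r * (a - 1) ≤ j' ∧ a' = D1 + 1 := by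
    split_ifs at e2 <;> omega
  by_cases hjj : j = j' + 1
  · subst hjj
    have hD1v : D1 = D0 + 1 := by omega
    have h1 : r * D1 = r * (D0 + 1) := congrArg (r * ·) hD1v
    have h2 : r * (D0 + 1) = r * D0 + r := by ring
    have hj'v : j' + 1 = r * D1 := by omega
    have ha'1 : a' - 1 = D1 := by omega
    have h3 : r * (a' - 1) = r * D1 := congrArg (r * ·) ha'1
    exact hexc' ⟨by omega, by omega⟩
  · split_ifs at e3 <;> omega

/-! ### Parameter set -/

def Pset (n r : ℕ) : Finset (ℕ × ℕ) :=
  (Finset.range n ×ˢ Finset.Icc 1 (n / r)).filter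
    (fun p => p.2 ≠ p.1 / r + 1 ∧ ¬(2 ≤ p.2 ∧ p.1 + 1 = r * (p.2 - 1)))

theorem mem_Pset {n r j a : ℕ} : (j, a) ∈ Pset n r ↔
    j < n ∧ 1 ≤ a ∧ a ≤ n / r ∧ a ≠ j / r + 1 ∧ ¬(2 ≤ a ∧ j + 1 = r * (a - 1)) := by
  unfold Pset
  simp only [Finset.mem_filter, Finset.mem_product, Finset.mem_range, Finset.mem_Icc]
  tauto

def Xf (n r : ℕ) (p : ℕ × ℕ) : Fin n → ℕ := fun k => xa r p.2 p.1 k.val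

def idm (n r : ℕ) : Fin n → ℕ := fun k => k.val / r + 1

theorem mult_one {n r : ℕ} : mult r (1 : Equiv.Perm (Fin n)) = idm n r := rfl

theorem mult_transloc {n r : ℕ} (i j : Fin n) (k : Fin n) :
    mult r (transloc i j) k = tf i.val j.val k.val / r + 1 := rfl

/-! ### succAbove and transloc -/

theorem sk_val {m : ℕ} (t : Fin (m + 1)) (p : Fin m) :
    (t.succAbove p).val = if p.val < t.val then p.val else p.val + 1 := by
  rcases lt_or_ge (p.castSucc) t with h | h
  · rw [Fin.succAbove_of_castSucc_lt t p h, if_pos]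
    · rfl
    · simpa [Fin.lt_def] using h
  · rw [Fin.succAbove_of_le_castSucc t p h, if_neg]
    · rfl
    · simp only [Fin.le_def, Fin.coe_castSucc] at h
      omega

theorem transloc_succAbove {m : ℕ} (i j : Fin (m + 1)) (p : Fin m) :
    transloc i j (j.succAbove p) = i.succAbove p := by
  apply Fin.ext
  show tf i.val j.val (j.succAbove p).val = (i.succAbove p).val
  rw [sk_val, sk_val]
  have hi := i.isLt
  have hj := j.isLt
  have hp := p.isLt
  unfold tf
  split_ifs <;> omega

theorem transloc_self {n : ℕ} (i j : Fin n) : transloc i j j = i := by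
  apply Fin.ext
  show tf i.val j.val j.val = i.val
  unfold tf
  split_ifs <;> omega

theorem lcsLen_le {n : ℕ} {α : Type*} (u v : Fin n → α) : lcsLen u v ≤ n := by
  refine csSup_le (lcs_set_nonempty u v) (fun k hk => ?_)
  obtain ⟨f, g, hf, hg, -⟩ := hk
  simpa using Fintype.card_le_of_injective f hf.injective
/-! ### Classification of one-translocation images -/

theorem transloc_mem {n r : ℕ} (hr : 0 < r) (hdvd : r ∣ n) (i j : Fin n) :
    mult r (transloc i j) ∈ insert (idm n r) ((Xf n r) '' ↑(Pset n r)) := by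
  have hn : r * (n / r) = n := Nat.mul_div_cancel' hdvd
  have hin := i.isLt
  have hjn := j.isLt
  have hdi0 := dspec hr i.val
  have hdj0 := dspec hr j.val
  obtain ⟨di, hdi⟩ : ∃ t, i.val / r = t := ⟨_, rfl⟩
  obtain ⟨dj, hdj⟩ : ∃ t, j.val / r = t := ⟨_, rfl⟩
  rw [hdi] at hdi0
  rw [hdj] at hdj0
  have hiq : di < n / r := by
    have h1 : i.val / r < n / r := by
      refine (Nat.div_lt_iff_lt_mul hr).2 ?_
      have h2 : (n / r) * r = r * (n / r) := Nat.mul_comm _ _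
      omega
    omega
  have hjq : dj < n / r := by
    have h1 : j.val / r < n / r := by
      refine (Nat.div_lt_iff_lt_mul hr).2 ?_
      have h2 : (n / r) * r = r * (n / r) := Nat.mul_comm _ _
      omega
    omega
  rcases lt_trichotomy di dj with hlt | heq | hgt
  · -- moving symbol right : left-type pair (j, di + 1)
    refine Set.mem_insert_iff.2 (Or.inr ⟨(j.val, di + 1), ?_, ?_⟩)
    · rw [Finset.mem_coe, mem_Pset]
      have hij : i.val < j.val := by
        by_contra hcon
        have := Nat.div_le_div_right (c := r) (show j.val ≤ i.val by omega)
        omega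
      refine ⟨hjn, by omega, by omega, by omega, ?_⟩
      rintro ⟨h2, h3⟩
      simp only [Nat.add_sub_cancel] at h3
      omega
    · funext k
      exact (tf_div_left hr (by rw [hdi]) (by rw [hdj]; omega) k.val).symm
  · -- same block : the identity multipermutation
    refine Set.mem_insert_iff.2 (Or.inl ?_)
    funext k
    show tf i.val j.val k.val / r + 1 = k.val / r + 1
    rw [tf_div_same hr (by rw [hdi, hdj]; omega) k.val]
  · -- moving symbol left
    by_cases hs : j.val + 1 = r * di
    · -- adjacent-block swap : use the canonical left-type pair (r * di, di)
      refine Set.mem_insert_iff.2 (Or.inr ⟨(r * di, di), ?_, ?_⟩)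
      · rw [Finset.mem_coe, mem_Pset]
        have hd : r * di / r = di := deq hr le_rfl (by omega)
        have hmono : r * (di - 1) ≤ r * di := Nat.mul_le_mul_left r (by omega)
        refine ⟨by omega, by omega, by omega, by omega, ?_⟩
        rintro ⟨h2, h3⟩
        omega
      · funext k
        have h := tf_div_swap hr (a := di + 1) (by rw [hdi]) (by rw [hdj]; omega)
          (by simpa using hs) k.val
        simp only [Nat.add_sub_cancel] at h
        exact h.symm
    · -- non-adjacent : right-type pair (j, di + 1)
      refine Set.mem_insert_iff.2 (Or.inr ⟨(j.val, di + 1), ?_, ?_⟩)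
      · rw [Finset.mem_coe, mem_Pset]
        refine ⟨hjn, by omega, by omega, by omega, ?_⟩
        rintro ⟨h2, h3⟩
        simp only [Nat.add_sub_cancel] at h3
        exact hs h3
      · funext k
        exact (tf_div_right hr (by rw [hdi]) (by rw [hdj]; omega) k.val).symm
/-! ### The sphere equals the insert-image set -/

theorem dist_transloc {m r : ℕ} (i j : Fin (m + 1)) :
    multDist r 1 (transloc i j) ≤ 1 := by
  have hm : m ≤ lcsLen (mult r (1 : Equiv.Perm (Fin (m+1)))) (mult r (transloc i j)) := by
    refine le_lcsLen i.succAbove j.succAbove (Fin.strictMono_succAbove i)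
      (Fin.strictMono_succAbove j) (fun p => ?_)
    show (i.succAbove p).val / r + 1 = ((transloc i j) (j.succAbove p)).val / r + 1
    rw [transloc_succAbove i j p]
  unfold multDist
  omega

theorem dist_one {m r : ℕ} : multDist r (1 : Equiv.Perm (Fin m)) 1 ≤ 1 := by
  have hm : m ≤ lcsLen (mult r (1 : Equiv.Perm (Fin m))) (mult r 1) :=
    le_lcsLen id id strictMono_id strictMono_id (fun p => rfl)
  unfold multDist
  omega

theorem sphere_eq {m r : ℕ} (hr : 0 < r) (hdvd : r ∣ (m + 1)) :
    multSphere r (1 : Equiv.Perm (Fin (m + 1))) 1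
      = insert (idm (m + 1) r) ((Xf (m + 1) r) '' ↑(Pset (m + 1) r)) := by
  have hn : r * ((m + 1) / r) = m + 1 := Nat.mul_div_cancel' hdvd
  apply Set.Subset.antisymm
  · rintro x ⟨π, hx, hd⟩
    have hlcs : m ≤ lcsLen (mult r (1 : Equiv.Perm (Fin (m+1)))) (mult r π) := by
      unfold multDist at hd
      have hb := lcsLen_le (mult r (1 : Equiv.Perm (Fin (m+1)))) (mult r π)
      omega
    obtain ⟨f, g, hf, hg, h⟩ := exists_of_le_lcsLen hlcs
    obtain ⟨ifin, hfi⟩ := strictMono_eq_succAbove hf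
    obtain ⟨jfin, hgj⟩ := strictMono_eq_succAbove hg
    subst hfi hgj
    have hcomp : (mult r π) ∘ jfin.succAbove
        = (mult r (1 : Equiv.Perm (Fin (m+1)))) ∘ ifin.succAbove :=
      funext fun p => (h p).symm
    have hmult : Multiset.map (mult r π) (Finset.univ : Finset (Fin (m+1))).val
        = Multiset.map (mult r (1 : Equiv.Perm (Fin (m+1))))
            (Finset.univ : Finset (Fin (m+1))).val :=
      map_perm_univ (mult r (1 : Equiv.Perm (Fin (m+1)))) π
    have hj := apply_eq_of_delete_eq (mult r π) (mult r (1 : Equiv.Perm (Fin (m+1))))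
      jfin ifin hmult hcomp
    have hxtr : mult r π = mult r (transloc ifin jfin) := by
      funext k
      rcases eq_or_ne k jfin with hk | hk
      · rw [hk, hj]
        show idm (m+1) r ((1 : Equiv.Perm (Fin (m+1))) ifin)
          = idm (m+1) r ((transloc ifin jfin) jfin)
        rw [transloc_self ifin jfin]
        rfl
      · have : k ∈ Set.range jfin.succAbove := by rw [Fin.range_succAbove]; exact hk
        obtain ⟨p, hp⟩ := this
        subst hp
        have h1 := congrFun hcomp p
        simp only [Function.comp_apply] at h1
        rw [h1]
        show idm (m+1) r ((1 : Equiv.Perm (Fin (m+1))) (ifin.succAbove p))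
          = idm (m+1) r ((transloc ifin jfin) (jfin.succAbove p))
        rw [transloc_succAbove ifin jfin p]
        rfl
    rw [hx, hxtr]
    exact transloc_mem hr hdvd ifin jfin
  · intro x hx
    rcases Set.mem_insert_iff.1 hx with hx1 | ⟨⟨j, a⟩, hmem, hx2⟩
    · exact ⟨1, by rw [hx1, mult_one], dist_one⟩
    · subst hx2
      rw [Finset.mem_coe, mem_Pset] at hmem
      obtain ⟨hjn, ha1, haq, hane, -⟩ := hmem
      have hdj0 := dspec hr j
      obtain ⟨dj, hdj⟩ : ∃ t, j / r = t := ⟨_, rfl⟩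
      rw [hdj] at hdj0
      rw [hdj] at hane
      have hbr : r * a = r * (a - 1) + r := rmul_sub_one ha1
      rcases lt_or_gt_of_ne hane with hca | hca
      · -- left type : i = r * (a - 1)
        have hraj : r * a ≤ j := by
          have h1 : a ≤ dj := by omega
          calc r * a ≤ r * dj := Nat.mul_le_mul_left r h1
            _ ≤ j := hdj0.1
        have hi : r * (a - 1) < m + 1 := by omega
        have ha : (r * (a - 1)) / r + 1 = a := by
          rw [deq hr le_rfl (by omega)]; omega
        refine ⟨transloc ⟨r * (a - 1), hi⟩ ⟨j, hjn⟩, ?_, dist_transloc _ _⟩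
        funext k
        show xa r a j k.val = tf (r * (a - 1)) j k.val / r + 1
        exact (tf_div_left hr ha (by rw [hdj]; omega) k.val).symm
      · -- right type : i = r * a - 1
        have hq : r * a ≤ m + 1 := by
          calc r * a ≤ r * ((m + 1) / r) := Nat.mul_le_mul_left r haq
            _ = m + 1 := hn
        have hi : r * a - 1 < m + 1 := by omega
        have ha : (r * a - 1) / r + 1 = a := by
          rw [deq hr (c := a - 1) (by omega) (by omega)]; omega
        refine ⟨transloc ⟨r * a - 1, hi⟩ ⟨j, hjn⟩, ?_, dist_transloc _ _⟩
        funext k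
        show xa r a j k.val = tf (r * a - 1) j k.val / r + 1
        exact (tf_div_right hr ha (by rw [hdj]; omega) k.val).symm
/-! ### Counting the parameter set -/

theorem card_Pset {n r : ℕ} (hr : 0 < r) (hdvd : r ∣ n) (hn0 : 0 < n) :
    (Pset n r).card = (n - 1) * (n / r - 1) := by
  have hq0 : r * (n / r) = n := Nat.mul_div_cancel' hdvd
  obtain ⟨q, hq'⟩ : ∃ t, n / r = t := ⟨_, rfl⟩
  rw [hq'] at hq0 ⊢
  have hq : r * q = n := hq0
  have hq1 : 1 ≤ q := by
    rcases Nat.eq_zero_or_pos q with h | h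
    · rw [h, Nat.mul_zero] at hq; omega
    · exact h
  set D1 : Finset (ℕ × ℕ) := (Finset.range n).image (fun j => (j, j / r + 1)) with hD1
  set D2 : Finset (ℕ × ℕ) := (Finset.Icc 2 q).image (fun a => (r * (a - 1) - 1, a)) with hD2
  have hr1 : r * 1 = r := Nat.mul_one r
  have hPeq : Pset n r = (Finset.range n ×ˢ Finset.Icc 1 q) \ (D1 ∪ D2) := by
    ext ⟨j, a⟩
    rw [mem_Pset, Finset.mem_sdiff, Finset.mem_product, Finset.mem_range, Finset.mem_Icc, hq']
    constructor
    · rintro ⟨hj, h1, h2, h3, h4⟩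
      refine ⟨⟨hj, h1, h2⟩, ?_⟩
      intro hcon
      rcases Finset.mem_union.1 hcon with hc | hc
      · obtain ⟨j0, hj0, he⟩ := Finset.mem_image.1 hc
        rw [Prod.mk.injEq] at he
        obtain ⟨h5, h6⟩ := he
        subst h5
        exact h3 h6.symm
      · obtain ⟨b, hb, he⟩ := Finset.mem_image.1 hc
        rw [Prod.mk.injEq] at he
        obtain ⟨h5, h6⟩ := he
        subst h6
        rw [Finset.mem_Icc] at hb
        have hge : r * 1 ≤ r * (b - 1) := Nat.mul_le_mul_left r (by omega)
        exact h4 ⟨hb.1, by omega⟩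
    · rintro ⟨⟨hj, h1, h2⟩, hnotin⟩
      refine ⟨hj, h1, h2, ?_, ?_⟩
      · intro hcon
        exact hnotin (Finset.mem_union_left _
          (Finset.mem_image.2 ⟨j, Finset.mem_range.2 hj, by rw [hcon]⟩))
      · rintro ⟨h2a, hswap⟩
        refine hnotin (Finset.mem_union_right _
          (Finset.mem_image.2 ⟨a, Finset.mem_Icc.2 ⟨h2a, h2⟩, ?_⟩))
        rw [Prod.mk.injEq]
        exact ⟨by omega, rfl⟩
  have hsub : D1 ∪ D2 ⊆ Finset.range n ×ˢ Finset.Icc 1 q := by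
    refine Finset.union_subset ?_ ?_
    · intro p hp
      obtain ⟨j0, hj0, rfl⟩ := Finset.mem_image.1 hp
      rw [Finset.mem_range] at hj0
      rw [Finset.mem_product, Finset.mem_range, Finset.mem_Icc]
      dsimp only
      have hlt : j0 / r < q := by
        refine (Nat.div_lt_iff_lt_mul hr).2 ?_
        have : q * r = r * q := Nat.mul_comm q r
        omega
      exact ⟨hj0, Nat.succ_le_succ (Nat.zero_le _), hlt⟩
    · intro p hp
      obtain ⟨b, hb, rfl⟩ := Finset.mem_image.1 hp
      rw [Finset.mem_Icc] at hb
      rw [Finset.mem_product, Finset.mem_range, Finset.mem_Icc]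
      dsimp only
      have hm1 : r * (b - 1) ≤ r * q := Nat.mul_le_mul_left r (by omega)
      have hm2 : r * 1 ≤ r * (b - 1) := Nat.mul_le_mul_left r (by omega)
      exact ⟨by omega, by omega, by omega⟩
  have hdisj : Disjoint D1 D2 := by
    rw [Finset.disjoint_left]
    rintro p hp1 hp2
    obtain ⟨j0, hj0, rfl⟩ := Finset.mem_image.1 hp1
    obtain ⟨b, hb, he⟩ := Finset.mem_image.1 hp2
    rw [Finset.mem_Icc] at hb
    rw [Prod.mk.injEq] at he
    obtain ⟨h5, h6⟩ := he
    have hds := dspec hr j0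
    obtain ⟨d, hd⟩ : ∃ t, j0 / r = t := ⟨_, rfl⟩
    rw [hd] at hds h6
    have hbd : b - 1 = d := by omega
    have htr : r * (b - 1) = r * d := congrArg (r * ·) hbd
    have hm2 : r * 1 ≤ r * (b - 1) := Nat.mul_le_mul_left r (by omega)
    omega
  have hcard_prod : (Finset.range n ×ˢ Finset.Icc 1 q).card = n * q := by
    rw [Finset.card_product, Finset.card_range, Nat.card_Icc]
    simp
  have hcard_D1 : D1.card = n := by
    rw [hD1, Finset.card_image_of_injective _ (fun x y h => congrArg Prod.fst h),
      Finset.card_range]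
  have hcard_D2 : D2.card = q - 1 := by
    rw [hD2, Finset.card_image_of_injective _ (fun x y h => congrArg Prod.snd h),
      Nat.card_Icc]
    omega
  have hcard_union : (D1 ∪ D2).card = n + (q - 1) := by
    rw [Finset.card_union_of_disjoint hdisj, hcard_D1, hcard_D2]
  rw [hPeq, Finset.card_sdiff_of_subset hsub, hcard_prod, hcard_union]
  obtain ⟨n0, rfl⟩ : ∃ n0, n = n0 + 1 := ⟨n - 1, by omega⟩
  obtain ⟨q0, hq0⟩ : ∃ q0, q = q0 + 1 := ⟨q - 1, by omega⟩
  rw [hq0]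
  have hex : (n0 + 1) * (q0 + 1) = n0 * q0 + n0 + q0 + 1 := by ring
  have hex2 : (n0 + 1 - 1) * (q0 + 1 - 1) = n0 * q0 := by simp
  omega
/-! ### Main theorem -/

/-- `|S(m_e^r, 1)| = 1 + (n−1)(n/r − 1)`. -/
theorem multSphere_identity_one_card {n r : ℕ} (hr : 0 < r) (hdvd : r ∣ n) :
    (multSphere r (1 : Equiv.Perm (Fin n)) 1).ncard = 1 + (n - 1) * (n / r - 1) := by
  rcases n with _ | m
  · have hsph : multSphere r (1 : Equiv.Perm (Fin 0)) 1
        = {mult r (1 : Equiv.Perm (Fin 0))} := by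
      ext x
      constructor
      · rintro ⟨π, hx, -⟩
        simp only [Set.mem_singleton_iff]
        exact funext fun k => k.elim0
      · rintro h
        refine ⟨1, funext fun k => k.elim0, ?_⟩
        unfold multDist
        omega
    rw [hsph, Set.ncard_singleton]
    simp
  · rw [sphere_eq hr hdvd]
    have hfin : ((Xf (m + 1) r) '' ↑(Pset (m + 1) r)).Finite :=
      ((Pset (m + 1) r).finite_toSet).image _
    have hnotmem : idm (m + 1) r ∉ (Xf (m + 1) r) '' ↑(Pset (m + 1) r) := by
      rintro ⟨⟨j, a⟩, hmem, he⟩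
      rw [Finset.mem_coe, mem_Pset] at hmem
      obtain ⟨hjn, -, -, hane, -⟩ := hmem
      have h0 := congrFun he ⟨j, hjn⟩
      rw [show Xf (m + 1) r (j, a) ⟨j, hjn⟩ = a from xa_self r a j] at h0
      exact hane h0
    rw [Set.ncard_insert_of_notMem hnotmem hfin]
    have hinj : Set.InjOn (Xf (m + 1) r) ↑(Pset (m + 1) r) := by
      rintro ⟨j1, a1⟩ hm1 ⟨j2, a2⟩ hm2 he
      rw [Finset.mem_coe, mem_Pset] at hm1 hm2
      rcases lt_trichotomy j1 j2 with hlt | heqj | hgt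
      · exact (xa_inj_core hr hm2.1 hm2.2.2.2.1 hm1.2.2.2.1 hm1.2.2.2.2 hlt
          (fun k hk => (congrFun he ⟨k, hk⟩).symm)).elim
      · subst heqj
        have h0 := congrFun he ⟨j1, hm1.1⟩
        rw [show Xf (m + 1) r (j1, a1) ⟨j1, hm1.1⟩ = a1 from xa_self r a1 j1,
          show Xf (m + 1) r (j1, a2) ⟨j1, hm1.1⟩ = a2 from xa_self r a2 j1] at h0
        rw [Prod.mk.injEq]
        exact ⟨rfl, h0⟩
      · exact (xa_inj_core hr hm1.1 hm1.2.2.2.1 hm2.2.2.2.1 hm2.2.2.2.2 hgt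
          (fun k hk => congrFun he ⟨k, hk⟩)).elim
    rw [Set.ncard_image_of_injOn hinj, Set.ncard_coe_finset,
      card_Pset hr hdvd (Nat.succ_pos m)]
    exact Nat.add_comm _ 1
end UlamPaper
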